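/- arXiv:math/0304059 — 2 statements merged into one kernel-verified Lean document; each statement's English description precedes it below -/
import Mathlib

section
/- Let w be an involution in the symmetric group S_n. Then w avoids both patterns 4231 and 3412 if and only if w is the longest element of some Young subgroup of S_n, i.e., there is a composition c = (n_1, ..., n_k) of n such that w is the permutation that reverses each of the consecutive blocks {1,...,n_1}, {n_1+1,...,n_1+n_2}, ..., of {1,...,n}. -/
/-- `w` is the block-reversal permutation (longest element of the Young subgroup)
associated to the composition `c`: within the block containing position `j`,
`w` maps `j` to its mirror image. -/
def IsBlockRev {n : ℕ} (c : Composition n) (w : Equiv.Perm (Fin n)) : Prop :=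
  ∀ j : Fin n, (w j : ℕ) + (j : ℕ) + 1 =
    c.sizeUpTo (c.index j) + c.sizeUpTo ((c.index j : ℕ) + 1)

/-- `w` avoids the pattern 4231. -/
def Avoids4231 {m : ℕ} (w : Equiv.Perm (Fin m)) : Prop :=
  ¬ ∃ i j k l : Fin m, i < j ∧ j < k ∧ k < l ∧ w l < w j ∧ w j < w k ∧ w k < w i

/-- `w` avoids the pattern 3412. -/
def Avoids3412 {m : ℕ} (w : Equiv.Perm (Fin m)) : Prop :=
  ¬ ∃ i j k l : Fin m, i < j ∧ j < k ∧ k < l ∧ w k < w l ∧ w l < w i ∧ w i < w j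

/-- Number of inversions (Coxeter length) of a permutation. -/
def invNum {n : ℕ} (w : Equiv.Perm (Fin n)) : ℕ :=
  (Finset.univ.filter (fun p : Fin n × Fin n => p.1 < p.2 ∧ w p.2 < w p.1)).card

/-- The Young subgroup associated to a composition `c`: permutations preserving
each consecutive block. -/
def YoungSubgroup {n : ℕ} (c : Composition n) : Subgroup (Equiv.Perm (Fin n)) where
  carrier := {w | ∀ j : Fin n, c.index (w j) = c.index j}
  one_mem' := by intro j; rfl
  mul_mem' := by
    intro a b ha hb j
    have h1 := ha (b j)
    have h2 := hb j
    simpa [Equiv.Perm.mul_apply] using h1.trans h2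
  inv_mem' := by
    intro a ha j
    have h := ha (a⁻¹ j)
    rw [show a (a⁻¹ j) = j from a.apply_symm_apply j] at h
    exact h.symm

/-- The decreasing reordering of a list of naturals. -/
def sortDesc (l : List ℕ) : List ℕ := Multiset.sort (l : Multiset ℕ) (· ≥ ·)

/-- The conjugate of a partition given as a list: `conjList l j = #{i : l i ≥ j+1}`. -/
def conjList (l : List ℕ) : List ℕ :=
  (List.range (l.foldr max 0)).map (fun j => (l.filter (fun a => j + 1 ≤ a)).length)

/-- Schensted row insertion: insert `x` into a row, returning the new row and
the bumped entry (if any). -/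
def insertRow (x : ℕ) : List ℕ → List ℕ × Option ℕ
  | [] => ([x], none)
  | y :: ys =>
    if x < y then (x :: ys, some y)
    else
      let p := insertRow x ys
      (y :: p.1, p.2)

/-- Schensted insertion of `x` into a tableau, returning the new tableau and the
index of the row where a new cell was created. -/
def insertT (x : ℕ) : List (List ℕ) → List (List ℕ) × ℕ
  | [] => ([[x]], 0)
  | r :: rs =>
    match insertRow x r with
    | (r', none) => (r' :: rs, 0)
    | (r', some y) =>
      let p := insertT y rs
      (r' :: p.1, p.2 + 1)

/-- Add a cell labelled `lbl` at the end of row `i` of a tableau. -/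
def addCell (lbl : ℕ) : ℕ → List (List ℕ) → List (List ℕ)
  | _, [] => [[lbl]]
  | 0, r :: rs => (r ++ [lbl]) :: rs
  | i + 1, r :: rs => r :: addCell lbl i rs

/-- The Robinson–Schensted correspondence: maps a word to its pair
(insertion tableau `P`, recording tableau `Q`). -/
def RS (word : List ℕ) : List (List ℕ) × List (List ℕ) :=
  (word.zipIdx.map Prod.swap).foldl
    (fun pq ix =>
      let p := insertT ix.2 pq.1
      (p.1, addCell (ix.1 + 1) p.2 pq.2))
    ([], [])

/-- The one-line word (with values in `{1, …, n}`) of a permutation of `Fin n`. -/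
def wordOf {n : ℕ} (w : Equiv.Perm (Fin n)) : List ℕ :=
  List.ofFn (fun i => (w i : ℕ) + 1)

/-- The shape of a tableau: the list of its row lengths. -/
def shapeOf (t : List (List ℕ)) : List ℕ := t.map List.length

/-- `t` is a standard Young tableau with entries `1, …, n`. -/
def IsStandard (n : ℕ) (t : List (List ℕ)) : Prop :=
  (∀ r ∈ t, List.Pairwise (· < ·) r) ∧
  List.Pairwise (· ≥ ·) (shapeOf t) ∧
  (∀ r ∈ t, r ≠ []) ∧
  (∀ i k : ℕ, i + 1 < t.length → k < (t.getD (i + 1) []).length →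
      (t.getD i []).getD k 0 < (t.getD (i + 1) []).getD k 0) ∧
  t.flatten.Perm (List.range' 1 n)

/-- `t` is a reading tableau: every entry `p` is either in the first row, or
`p - 1` lies in the previous row. -/
def IsReading (t : List (List ℕ)) : Prop :=
  ∀ p ∈ t.flatten,
    t.findIdx (fun r => r.contains p) = 0 ∨
      (p - 1) ∈ t.getD (t.findIdx (fun r => r.contains p) - 1) []

/-- Length of the `j`-th column of the Young diagram of `l`. -/
def colLen (l : List ℕ) (j : ℕ) : ℕ := (l.filter (fun a => j < a)).length

/-- The column superstandard tableau of shape `l`: cells are numbered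
consecutively within each column, columns taken from left to right. -/
def cssTableau (l : List ℕ) : List (List ℕ) :=
  (List.range l.length).map fun i =>
    (List.range (l.getD i 0)).map fun j =>
      ((List.range j).map (colLen l)).sum + i + 1

section Aux
variable {n : ℕ} (c : Composition n)

theorem index_unique (j : Fin n) (i : ℕ) (h1 : c.sizeUpTo i ≤ (j:ℕ))
    (h2 : (j:ℕ) < c.sizeUpTo (i+1)) : (c.index j : ℕ) = i := by
  by_contra h
  rcases Nat.lt_or_ge (c.index j : ℕ) i with hlt | hge
  · have := c.lt_sizeUpTo_index_succ j
    rw [Fin.val_succ] at this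
    have h3 : c.sizeUpTo ((c.index j : ℕ) + 1) ≤ c.sizeUpTo i :=
      c.monotone_sizeUpTo hlt
    omega
  · have hgt : i < (c.index j : ℕ) := lt_of_le_of_ne hge (fun h' => h h'.symm)
    have := c.sizeUpTo_index_le j
    have h3 : c.sizeUpTo (i + 1) ≤ c.sizeUpTo (c.index j : ℕ) :=
      c.monotone_sizeUpTo hgt
    omega

end Aux

section Back
variable {n : ℕ} {c : Composition n} {w : Equiv.Perm (Fin n)}

theorem sandwich (j : Fin n) :
    c.sizeUpTo (c.index j) ≤ (j:ℕ) ∧ (j:ℕ) < c.sizeUpTo ((c.index j : ℕ) + 1) := by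
  refine ⟨c.sizeUpTo_index_le j, ?_⟩
  have := c.lt_sizeUpTo_index_succ j
  rwa [Fin.val_succ] at this

theorem index_w (h : IsBlockRev c w) (j : Fin n) : (c.index (w j) : ℕ) = (c.index j : ℕ) := by
  obtain ⟨h1, h2⟩ := sandwich (c := c) j
  have hf := h j
  apply index_unique
  · omega
  · omega

theorem index_mono {i j : Fin n} (hij : i < j) : (c.index i : ℕ) ≤ (c.index j : ℕ) := by
  by_contra hlt
  push_neg at hlt
  obtain ⟨h1, h2⟩ := sandwich (c := c) i
  obtain ⟨h3, h4⟩ := sandwich (c := c) j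
  have : c.sizeUpTo ((c.index j : ℕ) + 1) ≤ c.sizeUpTo (c.index i : ℕ) :=
    c.monotone_sizeUpTo hlt
  have hij' : (i : ℕ) < j := hij
  omega

theorem index_lt_val {a b : Fin n} (hab : (c.index a : ℕ) < (c.index b : ℕ)) : a < b := by
  obtain ⟨h1, h2⟩ := sandwich (c := c) a
  obtain ⟨h3, h4⟩ := sandwich (c := c) b
  have : c.sizeUpTo ((c.index a : ℕ) + 1) ≤ c.sizeUpTo (c.index b : ℕ) :=
    c.monotone_sizeUpTo hab
  exact Fin.lt_def.2 (by omega)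

theorem blockRev_avoids (h : IsBlockRev c w) : Avoids4231 w ∧ Avoids3412 w := by
  have key : ∀ i j : Fin n, i < j → w i < w j → (c.index i : ℕ) < (c.index j : ℕ) := by
    intro i j hij hw
    rcases lt_or_eq_of_le (index_mono hij) with h' | h'
    · exact h'
    · exfalso
      have hi := h i; have hj := h j
      rw [h'] at hi
      have : (i:ℕ) < j := hij
      have : (w j : ℕ) < w i := by omega
      exact absurd hw (not_lt.2 (Fin.lt_def.2 this).le)
  constructor
  · rintro ⟨i, j, k, l, hij, hjk, hkl, p1, p2, p3⟩
    -- w l < w j < w k < w i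
    have hjk' : (c.index j : ℕ) < c.index k := key j k hjk p2
    have hik : (c.index i : ℕ) ≤ c.index j := index_mono hij
    have : (c.index (w i) : ℕ) < c.index (w k) := by
      rw [index_w h, index_w h]; omega
    exact absurd (index_lt_val this) (not_lt.2 (le_of_lt p3))
  · rintro ⟨i, j, k, l, hij, hjk, hkl, p1, p2, p3⟩
    -- w k < w l < w i < w j
    have hij' : (c.index i : ℕ) < c.index j := key i j hij p3
    have hjl : (c.index j : ℕ) ≤ c.index l := index_mono (hjk.trans hkl)
    have : (c.index (w i) : ℕ) < c.index (w l) := by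
      rw [index_w h, index_w h]; omega
    exact absurd (index_lt_val this) (not_lt.2 (le_of_lt p2))
end Back

section Res
variable {n : ℕ} (w : Equiv.Perm (Fin n)) (s : ℕ)
  (hw : ∀ i : Fin n, s ≤ (i : ℕ) → s ≤ (w i : ℕ))

/-- restriction of `w` to positions `≥ s`, shifted down by `s`. -/
def resFun (i : Fin (n - s)) : Fin (n - s) :=
  Fin.mk ((w (Fin.mk ((i : ℕ) + s) (by have := i.isLt; omega)) : ℕ) - s) (by
    have h1 := hw (Fin.mk ((i : ℕ) + s) (by have := i.isLt; omega)) (by simp)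
    have h2 := (w (Fin.mk ((i : ℕ) + s) (by have := i.isLt; omega))).isLt
    omega)

theorem resFun_add (i : Fin (n - s)) (j : Fin n) (hj : (j : ℕ) = (i : ℕ) + s) :
    (resFun w s hw i : ℕ) + s = (w j : ℕ) := by
  have hlt : (i : ℕ) + s < n := by have := i.isLt; omega
  have hje : j = Fin.mk ((i : ℕ) + s) hlt := Fin.ext hj
  subst hje
  have h1 := hw (Fin.mk ((i : ℕ) + s) hlt) (by simp)
  simp only [resFun]
  omega

theorem resFun_invol (hinv : ∀ x, w (w x) = x) (i : Fin (n - s)) :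
    resFun w s hw (resFun w s hw i) = i := by
  have hlt : (i : ℕ) + s < n := by have := i.isLt; omega
  have h1 := resFun_add w s hw i (Fin.mk ((i : ℕ) + s) hlt) rfl
  have h2 := resFun_add w s hw (resFun w s hw i) (w (Fin.mk ((i : ℕ) + s) hlt)) h1.symm
  rw [hinv] at h2
  exact Fin.ext (by simpa using h2)

/-- the restricted permutation. -/
def resPerm (hinv : ∀ x, w (w x) = x) : Equiv.Perm (Fin (n - s)) where
  toFun := resFun w s hw
  invFun := resFun w s hw
  left_inv := resFun_invol w s hw hinv
  right_inv := resFun_invol w s hw hinv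

end Res

section Res2
variable {n : ℕ} (w : Equiv.Perm (Fin n)) (s : ℕ)
  (hw : ∀ i : Fin n, s ≤ (i : ℕ) → s ≤ (w i : ℕ)) (hinv : ∀ x, w (w x) = x)

theorem resPerm_add (a : Fin (n - s)) (j : Fin n) (hj : (j : ℕ) = (a : ℕ) + s) :
    (resPerm w s hw hinv a : ℕ) + s = (w j : ℕ) :=
  resFun_add w s hw a j hj

theorem res_avoids4231 (h : Avoids4231 w) : Avoids4231 (resPerm w s hw hinv) := by
  rintro ⟨i, j, k, l, hij, hjk, hkl, p1, p2, p3⟩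
  apply h
  obtain ⟨i', hi'⟩ : ∃ a : Fin n, (a : ℕ) = (i : ℕ) + s :=
    ⟨⟨(i : ℕ) + s, by have := i.isLt; omega⟩, rfl⟩
  obtain ⟨j', hj'⟩ : ∃ a : Fin n, (a : ℕ) = (j : ℕ) + s :=
    ⟨⟨(j : ℕ) + s, by have := j.isLt; omega⟩, rfl⟩
  obtain ⟨k', hk'⟩ : ∃ a : Fin n, (a : ℕ) = (k : ℕ) + s :=
    ⟨⟨(k : ℕ) + s, by have := k.isLt; omega⟩, rfl⟩
  obtain ⟨l', hl'⟩ : ∃ a : Fin n, (a : ℕ) = (l : ℕ) + s :=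
    ⟨⟨(l : ℕ) + s, by have := l.isLt; omega⟩, rfl⟩
  have vi := resPerm_add w s hw hinv i i' hi'
  have vj := resPerm_add w s hw hinv j j' hj'
  have vk := resPerm_add w s hw hinv k k' hk'
  have vl := resPerm_add w s hw hinv l l' hl'
  have q1 := Fin.lt_def.1 hij; have q2 := Fin.lt_def.1 hjk; have q3 := Fin.lt_def.1 hkl
  have r1 := Fin.lt_def.1 p1; have r2 := Fin.lt_def.1 p2; have r3 := Fin.lt_def.1 p3
  exact ⟨i', j', k', l', Fin.lt_def.2 (by omega), Fin.lt_def.2 (by omega),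
    Fin.lt_def.2 (by omega), Fin.lt_def.2 (by omega), Fin.lt_def.2 (by omega),
    Fin.lt_def.2 (by omega)⟩

theorem res_avoids3412 (h : Avoids3412 w) : Avoids3412 (resPerm w s hw hinv) := by
  rintro ⟨i, j, k, l, hij, hjk, hkl, p1, p2, p3⟩
  apply h
  obtain ⟨i', hi'⟩ : ∃ a : Fin n, (a : ℕ) = (i : ℕ) + s :=
    ⟨⟨(i : ℕ) + s, by have := i.isLt; omega⟩, rfl⟩
  obtain ⟨j', hj'⟩ : ∃ a : Fin n, (a : ℕ) = (j : ℕ) + s :=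
    ⟨⟨(j : ℕ) + s, by have := j.isLt; omega⟩, rfl⟩
  obtain ⟨k', hk'⟩ : ∃ a : Fin n, (a : ℕ) = (k : ℕ) + s :=
    ⟨⟨(k : ℕ) + s, by have := k.isLt; omega⟩, rfl⟩
  obtain ⟨l', hl'⟩ : ∃ a : Fin n, (a : ℕ) = (l : ℕ) + s :=
    ⟨⟨(l : ℕ) + s, by have := l.isLt; omega⟩, rfl⟩
  have vi := resPerm_add w s hw hinv i i' hi'
  have vj := resPerm_add w s hw hinv j j' hj'
  have vk := resPerm_add w s hw hinv k k' hk'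
  have vl := resPerm_add w s hw hinv l l' hl'
  have q1 := Fin.lt_def.1 hij; have q2 := Fin.lt_def.1 hjk; have q3 := Fin.lt_def.1 hkl
  have r1 := Fin.lt_def.1 p1; have r2 := Fin.lt_def.1 p2; have r3 := Fin.lt_def.1 p3
  exact ⟨i', j', k', l', Fin.lt_def.2 (by omega), Fin.lt_def.2 (by omega),
    Fin.lt_def.2 (by omega), Fin.lt_def.2 (by omega), Fin.lt_def.2 (by omega),
    Fin.lt_def.2 (by omega)⟩

end Res2

theorem forward_blockRev : ∀ n : ℕ, ∀ w : Equiv.Perm (Fin n),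
    (∀ x, w (w x) = x) → Avoids4231 w → Avoids3412 w →
    ∃ c : Composition n, IsBlockRev c w := by
  intro n
  induction n using Nat.strong_induction_on with
  | _ n IH =>
  intro w hinv h1 h2
  rcases Nat.eq_zero_or_pos n with hn | hn
  · subst hn
    exact ⟨Composition.ones 0, fun j => j.elim0⟩
  set z : Fin n := ⟨0, hn⟩ with hz
  set m : ℕ := (w z : ℕ) with hmdef
  have hm : m < n := (w z).isLt
  -- Step A : positions ≤ m map to values ≤ m
  have hA : ∀ i : Fin n, (i : ℕ) ≤ m → (w i : ℕ) ≤ m := by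
    intro i hi
    by_contra hgt
    push_neg at hgt
    have hi0 : (i : ℕ) ≠ 0 := by
      intro h0
      have : i = z := Fin.ext h0
      rw [this] at hgt
      omega
    have him : (i : ℕ) ≠ m := by
      intro h0
      have : i = w z := Fin.ext h0
      rw [this, hinv] at hgt
      simp [hz] at hgt
    apply h2
    refine ⟨z, i, w z, w i, Fin.lt_def.2 ?_, Fin.lt_def.2 ?_, Fin.lt_def.2 ?_,
      Fin.lt_def.2 ?_, Fin.lt_def.2 ?_, Fin.lt_def.2 ?_⟩
    · simp [hz]; omega
    · omega
    · omega
    · rw [hinv, hinv]; simp [hz]; omega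
    · rw [hinv]; omega
    · omega
  -- Step B : w is strictly decreasing on positions ≤ m
  have hB : ∀ i j : Fin n, (i : ℕ) < (j : ℕ) → (j : ℕ) ≤ m → (w j : ℕ) < (w i : ℕ) := by
    intro i j hij hjm
    have hwj := hA j hjm
    have hwi := hA i (by omega)
    have hne : (w i : ℕ) ≠ (w j : ℕ) := by
      intro h0
      have : w i = w j := Fin.ext h0
      have : i = j := w.injective this
      rw [this] at hij; omega
    rcases Nat.eq_zero_or_pos (i : ℕ) with hi0 | hi0
    · have hiz : i = z := Fin.ext hi0
      have hwiz : (w i : ℕ) = m := by rw [hiz]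
      omega
    rcases eq_or_ne ((j : ℕ)) m with hjm' | hjm'
    · have : j = w z := Fin.ext hjm'
      rw [this, hinv]
      simp [hz]
      have : (w i : ℕ) ≠ (z : ℕ) := by
        intro h0
        have : w i = z := Fin.ext h0
        have : i = w z := by rw [← this, hinv]
        rw [this] at hij
        omega
      simp [hz] at this
      omega
    · by_contra hc
      push_neg at hc
      have hlt : (w i : ℕ) < (w j : ℕ) := by omega
      have hz0 : (z : ℕ) = 0 := rfl
      have hwi0 : (w i : ℕ) ≠ 0 := by
        intro h0
        have hwz : w i = z := Fin.ext (by omega)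
        have : i = w z := by rw [← hwz, hinv]
        have : (i : ℕ) = m := by rw [this]
        omega
      apply h1
      refine ⟨z, i, j, w z, Fin.lt_def.2 ?_, Fin.lt_def.2 ?_, Fin.lt_def.2 ?_,
        Fin.lt_def.2 ?_, Fin.lt_def.2 ?_, Fin.lt_def.2 ?_⟩
      · simp [hz]; omega
      · omega
      · omega
      · rw [hinv]; omega
      · omega
      · have hne2 : (w j : ℕ) ≠ m := by
          intro h0
          have hjz : j = z := w.injective (Fin.ext h0)
          have : (j : ℕ) = 0 := by rw [hjz]
          omega
        omega
  -- Step C : w i = m - i for i ≤ m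
  have hCu : ∀ d : ℕ, d ≤ m → ∀ i : Fin n, (i : ℕ) = d → (w i : ℕ) + d ≤ m := by
    intro d
    induction d with
    | zero =>
      intro _ i hi
      have : i = z := Fin.ext hi
      rw [this]; omega
    | succ d ihd =>
      intro hd i hi
      have hd' : d < n := by omega
      have h1' := ihd (by omega) ⟨d, hd'⟩ rfl
      have h2' := hB ⟨d, hd'⟩ i (by simp [hi]) (by omega)
      simp at h2'
      omega
  have hCl : ∀ d : ℕ, d ≤ m → ∀ i : Fin n, (i : ℕ) = m - d → d ≤ (w i : ℕ) := by
    intro d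
    induction d with
    | zero => intro _ i _; omega
    | succ d ihd =>
      intro hd i hi
      have hmd : m - d < n := by omega
      have h1' := ihd (by omega) ⟨m - d, hmd⟩ rfl
      have h2' := hB i ⟨m - d, hmd⟩ (by simp [hi]; omega) (by simp)
      simp at h2'
      omega
  have hC : ∀ i : Fin n, (i : ℕ) ≤ m → (w i : ℕ) = m - (i : ℕ) := by
    intro i hi
    have h1' := hCu (i : ℕ) hi i rfl
    have h2' := hCl (m - (i : ℕ)) (by omega) i (by omega)
    omega
  -- Step D : positions > m map to values > m
  have hD : ∀ i : Fin n, m + 1 ≤ (i : ℕ) → m + 1 ≤ (w i : ℕ) := by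
    intro i hi
    by_contra hc
    push_neg at hc
    have h1' := hC (w i) (by omega)
    rw [hinv] at h1'
    omega
  -- restrict to positions > m and apply the induction hypothesis
  set s : ℕ := m + 1 with hsdef
  have hinv' : ∀ x, resPerm w s hD hinv (resPerm w s hD hinv x) = x :=
    resFun_invol w s hD hinv
  have ha' := res_avoids4231 w s hD hinv h1
  have hb' := res_avoids3412 w s hD hinv h2
  obtain ⟨c', hc'⟩ := IH (n - s) (by omega) (resPerm w s hD hinv) hinv' ha' hb'
  have hpos : ∀ i ∈ (s :: c'.blocks), 0 < i := by
    intro i hi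
    rcases List.mem_cons.1 hi with h | h
    · omega
    · exact c'.blocks_pos h
  have hsum : (s :: c'.blocks).sum = n := by
    rw [List.sum_cons, c'.blocks_sum]; omega
  refine ⟨⟨s :: c'.blocks, fun hi => hpos _ hi, hsum⟩, ?_⟩
  set c : Composition n := ⟨s :: c'.blocks, fun hi => hpos _ hi, hsum⟩ with hcd
  have hsz : ∀ i : ℕ, c.sizeUpTo (i + 1) = s + c'.sizeUpTo i := by
    intro i
    simp [Composition.sizeUpTo, hcd, List.take_succ_cons]
  intro j
  by_cases hj : (j : ℕ) < s
  · have hidx : (c.index j : ℕ) = 0 :=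
      index_unique c j 0 (by rw [Composition.sizeUpTo_zero]; omega)
        (by rw [hsz 0, Composition.sizeUpTo_zero]; omega)
    have hwj := hC j (by omega)
    rw [hidx, Composition.sizeUpTo_zero, hsz 0, Composition.sizeUpTo_zero]
    omega
  · push_neg at hj
    have hjn := j.isLt
    set j' : Fin (n - s) := ⟨(j : ℕ) - s, by omega⟩ with hj'def
    have hjv : (j' : ℕ) = (j : ℕ) - s := rfl
    have hval : (resPerm w s hD hinv j' : ℕ) + s = (w j : ℕ) :=
      resPerm_add w s hD hinv j' j (by omega)
    have hf := hc' j'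
    obtain ⟨hs1, hs2⟩ := sandwich (c := c') j'
    set b : ℕ := (c'.index j' : ℕ) with hbdef
    have hidx : (c.index j : ℕ) = b + 1 := by
      apply index_unique
      · rw [hsz b]; omega
      · rw [hsz (b + 1)]; omega
    have e1 : c.sizeUpTo (b + 1) = s + c'.sizeUpTo b := hsz b
    have e2 : c.sizeUpTo (b + 1 + 1) = s + c'.sizeUpTo (b + 1) := hsz (b + 1)
    rw [hidx]
    omega

/-- An involution in `S_n` avoids the patterns 4231 and 3412 iff it is the
longest element of some Young subgroup, i.e. the block-reversal permutation of
some composition of `n`. -/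
theorem involution_avoids_iff_blockRev {n : ℕ} (w : Equiv.Perm (Fin n))
    (hw : w * w = 1) :
    (Avoids4231 w ∧ Avoids3412 w) ↔ ∃ c : Composition n, IsBlockRev c w := by
  have hinv : ∀ x, w (w x) = x := fun x => by
    rw [← Equiv.Perm.mul_apply, hw, Equiv.Perm.one_apply]
  constructor
  · rintro ⟨h1, h2⟩
    exact forward_blockRev n w hinv h1 h2
  · rintro ⟨c, hc⟩
    exact blockRev_avoids hc
end

section
/- Let c and c' be two compositions of n. The Young subgroups S_c and S_{c'} are conjugate in S_n if and only if the decreasing reorderings of c and c' are equal. -/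
section Aux

lemma perm_apply_inv_self {n : ℕ} (g : Equiv.Perm (Fin n)) (x : Fin n) : g (g⁻¹ x) = x :=
  g.apply_symm_apply x

lemma perm_inv_apply_self {n : ℕ} (g : Equiv.Perm (Fin n)) (x : Fin n) : g⁻¹ (g x) = x :=
  g.symm_apply_apply x

open Composition List

lemma swap_mem_young {n : ℕ} {c : Composition n} {j k : Fin n}
    (h : c.index j = c.index k) : Equiv.swap j k ∈ YoungSubgroup c := by
  intro l
  rcases eq_or_ne l j with rfl | hj
  · rw [Equiv.swap_apply_left]; exact h.symm
  rcases eq_or_ne l k with rfl | hk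
  · rw [Equiv.swap_apply_right]; exact h
  · rw [Equiv.swap_apply_of_ne_of_ne hj hk]

lemma young_rel {n : ℕ} {c : Composition n} {j k : Fin n} :
    (∃ w ∈ YoungSubgroup c, w j = k) ↔ c.index j = c.index k := by
  constructor
  · rintro ⟨w, hw, rfl⟩
    exact (hw j).symm
  · intro h
    exact ⟨Equiv.swap j k, swap_mem_young h, Equiv.swap_apply_left _ _⟩

lemma fiber_card {n : ℕ} (c : Composition n) (i : Fin c.length) :
    (Finset.univ.filter (fun j => c.index j = i)).card = c.blocksFun i := by
  classical
  have h1 : Finset.univ.filter (fun j => c.index j = i) =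
      Finset.univ.image (c.embedding i) := by
    ext j
    simp only [Finset.mem_filter, Finset.mem_univ, true_and, Finset.mem_image]
    constructor
    · intro h
      obtain ⟨a, ha⟩ := Set.mem_range.1 (c.mem_range_embedding_iff'.2 h.symm)
      exact ⟨a, ha⟩
    · rintro ⟨a, -, rfl⟩
      exact c.index_embedding i a
  rw [h1, Finset.card_image_of_injective _ (c.embedding i).injective,
    Finset.card_univ, Fintype.card_fin]

lemma ofFn_perm_of_comp {α : Type*} {m m' : ℕ} (h : m = m') (f : Fin m' → α)
    (e : Fin m ≃ Fin m') : (List.ofFn (f ∘ e)).Perm (List.ofFn f) := by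
  subst h
  exact Equiv.Perm.ofFn_comp_perm e f

lemma ofFn_cast {α : Type*} {m m' : ℕ} (h : m = m') (f : Fin m' → α) :
    List.ofFn (fun i : Fin m => f (Fin.cast h i)) = List.ofFn f := by
  subst h; rfl

lemma sortDesc_eq_iff {l l' : List ℕ} :
    sortDesc l = sortDesc l' ↔ l.Perm l' := by
  constructor
  · intro h
    rw [← Multiset.coe_eq_coe,
      ← Multiset.sort_eq (s := (l : Multiset ℕ)) (r := (· ≥ ·)),
      ← Multiset.sort_eq (s := (l' : Multiset ℕ)) (r := (· ≥ ·))]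
    exact congrArg _ h
  · intro h
    unfold sortDesc
    rw [Multiset.coe_eq_coe.2 h]

lemma exists_equiv_iff_sortDesc {n : ℕ} (c c' : Composition n) :
    (∃ φ : Fin c.length ≃ Fin c'.length, ∀ i, c.blocksFun i = c'.blocksFun (φ i)) ↔
      sortDesc c.blocks = sortDesc c'.blocks := by
  constructor
  · rintro ⟨φ, hφ⟩
    have hm : c.length = c'.length := by
      simpa using Fintype.card_congr φ
    rw [sortDesc_eq_iff]
    rw [← c.ofFn_blocksFun, ← c'.ofFn_blocksFun]
    have hfe : c.blocksFun = c'.blocksFun ∘ φ := funext hφ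
    rw [hfe]
    exact ofFn_perm_of_comp hm _ φ
  · intro h
    have hperm : c.blocks.Perm c'.blocks := sortDesc_eq_iff.1 h
    have hm : c.length = c'.length := hperm.length_eq
    set f : Fin c.length → ℕ := c.blocksFun with hf
    set f'' : Fin c.length → ℕ := fun i => c'.blocksFun (Fin.cast hm i) with hf''
    have pofn : (List.ofFn f).Perm (List.ofFn f'') := by
      rw [show List.ofFn f'' = List.ofFn c'.blocksFun from ofFn_cast hm _,
        hf, c.ofFn_blocksFun, c'.ofFn_blocksFun]
      exact hperm
    have hsorted : List.ofFn (f ∘ Tuple.sort f) = List.ofFn (f'' ∘ Tuple.sort f'') :=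
      List.Perm.eq_of_pairwise'
        (List.sortedLE_ofFn_iff.2 (Tuple.monotone_sort f)).pairwise
        (List.sortedLE_ofFn_iff.2 (Tuple.monotone_sort f'')).pairwise
        (((Tuple.sort f).ofFn_comp_perm f).trans
          (pofn.trans ((Tuple.sort f'').ofFn_comp_perm f'').symm))
    have key : ∀ i, f (Tuple.sort f i) = f'' (Tuple.sort f'' i) := by
      intro i
      have := congrArg (fun l => l.getD (i : ℕ) 0) hsorted
      simpa [List.getD_eq_getElem?_getD, List.getElem?_ofFn, i.isLt] using this
    refine ⟨((Tuple.sort f).symm.trans (Tuple.sort f'')).trans (finCongr hm), ?_⟩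
    intro i
    have h1 : f i = f'' (Tuple.sort f'' ((Tuple.sort f).symm i)) := by
      conv_lhs => rw [show i = Tuple.sort f ((Tuple.sort f).symm i) by simp]
      exact key _
    simpa using h1

lemma young_conj_of_equiv {n : ℕ} (c c' : Composition n)
    (φ : Fin c.length ≃ Fin c'.length) (hφ : ∀ i, c.blocksFun i = c'.blocksFun (φ i)) :
    ∃ g : Equiv.Perm (Fin n),
      (YoungSubgroup c).map (MulAut.conj g).toMonoidHom = YoungSubgroup c' := by
  classical
  let F : ∀ i : Fin c.length, Fin (c.blocksFun i) ≃ Fin (c'.blocksFun (φ i)) :=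
    fun i => finCongr (hφ i)
  let g : Equiv.Perm (Fin n) :=
    (c.blocksFinEquiv.symm.trans ((Equiv.sigmaCongr φ F).trans c'.blocksFinEquiv))
  have hg : ∀ j : Fin n, c'.index (g j) = φ (c.index j) := by
    intro j
    show c'.index (c'.blocksFinEquiv (Equiv.sigmaCongr φ F (c.blocksFinEquiv.symm j))) = _
    have hsymm : c.blocksFinEquiv.symm j = ⟨c.index j, c.invEmbedding j⟩ := rfl
    rw [hsymm]
    show c'.index (c'.blocksFinEquiv ⟨φ (c.index j), F _ (c.invEmbedding j)⟩) = _
    exact c'.index_embedding _ _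
  refine ⟨g, ?_⟩
  ext w
  rw [Subgroup.mem_map]
  constructor
  · rintro ⟨h, hh, rfl⟩
    intro k
    simp only [MulEquiv.coe_toMonoidHom, MulAut.conj_apply, Equiv.Perm.mul_apply]
    rw [hg, hh, ← hg, perm_apply_inv_self]
  · intro hw
    refine ⟨g⁻¹ * w * g, ?_, by
      simp only [MulEquiv.coe_toMonoidHom, MulAut.conj_apply]
      group⟩
    intro j
    have hinj := φ.injective
    apply hinj
    simp only [Equiv.Perm.mul_apply]
    rw [← hg, perm_apply_inv_self, hw, hg]

end Aux

/-- Two Young subgroups of `S_n` are conjugate iff the decreasing reorderings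
of the corresponding compositions coincide. -/
theorem youngSubgroup_conjugate_iff {n : ℕ} (c c' : Composition n) :
    (∃ g : Equiv.Perm (Fin n),
        (YoungSubgroup c).map (MulAut.conj g).toMonoidHom = YoungSubgroup c') ↔
      sortDesc c.blocks = sortDesc c'.blocks := by
  constructor
  · rintro ⟨g, hg⟩
    have rel : ∀ j k : Fin n, c'.index j = c'.index k ↔
        c.index (g⁻¹ j) = c.index (g⁻¹ k) := by
      intro j k
      rw [← young_rel, ← young_rel]
      constructor
      · rintro ⟨w, hw, rfl⟩
        have hw' : g⁻¹ * w * g ∈ YoungSubgroup c := by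
          rw [← hg] at hw
          rcases Subgroup.mem_map.1 hw with ⟨h, hh, rfl⟩
          have : g⁻¹ * (MulAut.conj g).toMonoidHom h * g = h := by
            simp only [MulEquiv.coe_toMonoidHom, MulAut.conj_apply]
            group
          rwa [this]
        exact ⟨g⁻¹ * w * g, hw', by simp [Equiv.Perm.mul_apply]⟩
      · rintro ⟨h, hh, hjk⟩
        refine ⟨g * h * g⁻¹, ?_, ?_⟩
        · rw [← hg]
          exact Subgroup.mem_map.2 ⟨h, hh, by
            simp only [MulEquiv.coe_toMonoidHom, MulAut.conj_apply]⟩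
        · simp only [Equiv.Perm.mul_apply, hjk, perm_apply_inv_self]
    let wit : Fin c'.length → Fin n := fun i => c'.embedding i ⟨0, c'.one_le_blocks (c'.blocksFun_mem_blocks i)⟩
    have hwit : ∀ i, c'.index (wit i) = i := fun i => c'.index_embedding i _
    let ψ : Fin c'.length → Fin c.length := fun i => c.index (g⁻¹ (wit i))
    have key2 : ∀ j, c.index (g⁻¹ j) = ψ (c'.index j) := fun j =>
      (rel j (wit (c'.index j))).1 (by rw [hwit])
    have hinj : Function.Injective ψ := by
      intro i i' h
      have := (rel (wit i) (wit i')).2 h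
      rwa [hwit, hwit] at this
    have hsurj : Function.Surjective ψ := by
      intro i₀
      refine ⟨c'.index (g (c.embedding i₀ ⟨0, c.one_le_blocks (c.blocksFun_mem_blocks i₀)⟩)), ?_⟩
      rw [← key2, perm_inv_apply_self, c.index_embedding]
    let φ : Fin c'.length ≃ Fin c.length := Equiv.ofBijective ψ ⟨hinj, hsurj⟩
    have hφ : ∀ i, c'.blocksFun i = c.blocksFun (φ i) := by
      intro i
      rw [← fiber_card, ← fiber_card]
      refine Finset.card_bij (fun j _ => g⁻¹ j) ?_ ?_ ?_
      · intro j hj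
        simp only [Finset.mem_filter, Finset.mem_univ, true_and] at hj ⊢
        rw [key2, hj]
        rfl
      · intro a _ b _ hab
        exact g⁻¹.injective hab
      · intro k hk
        simp only [Finset.mem_filter, Finset.mem_univ, true_and] at hk
        have h1 : c.index (g⁻¹ (g k)) = ψ (c'.index (g k)) := key2 (g k)
        rw [perm_inv_apply_self] at h1
        have h2 : c'.index (g k) = i := hinj (by rw [← h1, hk]; rfl)
        exact ⟨g k, by simpa [Finset.mem_filter] using h2, perm_inv_apply_self g k⟩
    exact ((exists_equiv_iff_sortDesc c' c).1 ⟨φ, hφ⟩).symm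
  · intro h
    obtain ⟨φ, hφ⟩ := (exists_equiv_iff_sortDesc c c').2 h
    exact young_conj_of_equiv c c' φ hφ
end
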